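/- A vertex subset R of an oriented graph G is an oriented relative clique (i.e., all vertices of R receive pairwise distinct images under every homomorphism of G) if and only if every pair of distinct non-adjacent vertices in R is connected by a directed path of length 2. -/
import Mathlib



/-- An oriented graph: a directed graph with no loops and no directed 2-cycles. -/
structure OGraph (V : Type*) where
  adj : V → V → Prop
  irrefl : ∀ v, ¬ adj v v
  asymm : ∀ u v, adj u v → ¬ adj v u

/-- A homomorphism of oriented graphs. -/
def OGraph.Hom {V W : Type*} (G : OGraph V) (H : OGraph W) (f : V → W) : Prop :=
  ∀ u v, G.adj u v → H.adj (f u) (f v)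

/-- `f` is a `b`-fold oriented `k`-coloring of `G`. -/
def IsFoldColoring {V : Type*} (G : OGraph V) (b k : ℕ) (f : V → Finset (Fin k)) : Prop :=
  (∀ v, (f v).card = b) ∧
  (∀ u v, G.adj u v → Disjoint (f u) (f v)) ∧
  (∀ x y z w, G.adj x y → G.adj z w → ¬ Disjoint (f x) (f w) → Disjoint (f y) (f z))

/-- The `b`-fold oriented chromatic number. -/
noncomputable def foldChrom {V : Type*} (G : OGraph V) (b : ℕ) : ℕ :=
  sInf {k | ∃ f : V → Finset (Fin k), IsFoldColoring G b k f}

/-- The fractional oriented chromatic number: the infimum of `k/b` over all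
`b`-fold oriented `k`-colorings. -/
noncomputable def fracChrom {V : Type*} (G : OGraph V) : ℝ :=
  sInf {x : ℝ | ∃ (b k : ℕ) (f : V → Finset (Fin k)),
    0 < b ∧ IsFoldColoring G b k f ∧ x = (k : ℝ) / b}


theorem stmt4 {V : Type} (G : OGraph V) (R : Set V) :
    (∀ (W : Type) (H : OGraph W) (f : V → W), G.Hom H f →
        ∀ x ∈ R, ∀ y ∈ R, x ≠ y → f x ≠ f y) ↔
      (∀ x ∈ R, ∀ y ∈ R, x ≠ y → ¬ (G.adj x y ∨ G.adj y x) →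
        ∃ z, (G.adj x z ∧ G.adj z y) ∨ (G.adj y z ∧ G.adj z x)) := by
  classical
  constructor
  · intro hhom x hx y hy hxy hnadj
    by_contra hz
    set f : V → V := fun v => if v = y then x else v with hf
    have hfy : f y = x := by simp [hf]
    have hfx : f x = x := by simp [hf, hxy]
    have hkey : ∀ u v, f u = f v → u = v ∨ (u = x ∧ v = y) ∨ (u = y ∧ v = x) := by
      intro u v
      simp only [hf]
      split_ifs with h1 h2 h2
      · intro _; exact Or.inl (h1.trans h2.symm)
      · intro h; exact Or.inr (Or.inr ⟨h1, h.symm⟩)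
      · intro h; exact Or.inr (Or.inl ⟨h, h2⟩)
      · exact Or.inl
    have hnxy : ¬ G.adj x y := fun h => hnadj (Or.inl h)
    have hnyx : ¬ G.adj y x := fun h => hnadj (Or.inr h)
    set H : OGraph V :=
      { adj := fun a b => ∃ u v, G.adj u v ∧ f u = a ∧ f v = b
        irrefl := by
          rintro a ⟨u, v, huv, hu, hv⟩
          rcases hkey u v (hu.trans hv.symm) with h | ⟨h1, h2⟩ | ⟨h1, h2⟩
          · exact G.irrefl v (h ▸ huv)
          · exact hnxy (h1 ▸ h2 ▸ huv)
          · exact hnyx (h1 ▸ h2 ▸ huv)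
        asymm := by
          rintro a b ⟨u, v, huv, hu, hv⟩ ⟨u', v', hu'v', hu', hv'⟩
          have e1 := hkey v u' (hv.trans hu'.symm)
          have e2 := hkey v' u (hv'.trans hu.symm)
          rcases e1 with h | ⟨h1, h2⟩ | ⟨h1, h2⟩ <;>
            rcases e2 with g | ⟨g1, g2⟩ | ⟨g1, g2⟩
          · rw [← h] at hu'v'; rw [g] at hu'v'
            exact G.asymm u v huv hu'v'
          · rw [g2] at huv; rw [← h, g1] at hu'v'
            exact hz ⟨v, Or.inr ⟨huv, hu'v'⟩⟩
          · rw [g2] at huv; rw [← h, g1] at hu'v'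
            exact hz ⟨v, Or.inl ⟨huv, hu'v'⟩⟩
          · rw [h1] at huv; rw [h2, g] at hu'v'
            exact hz ⟨u, Or.inr ⟨hu'v', huv⟩⟩
          · rw [g2, h1] at huv; exact hnyx huv
          · rw [g2, h1] at huv; exact G.irrefl x huv
          · rw [h1] at huv; rw [h2, g] at hu'v'
            exact hz ⟨u, Or.inl ⟨hu'v', huv⟩⟩
          · rw [g2, h1] at huv; exact G.irrefl y huv
          · rw [g2, h1] at huv; exact hnxy huv } with hH
    have hfhom : G.Hom H f := fun u v h => ⟨u, v, h, rfl, rfl⟩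
    exact hhom V H f hfhom x hx y hy hxy (hfx.trans hfy.symm)
  · intro h2p W H f hf x hx y hy hxy heq
    by_cases hadj : G.adj x y ∨ G.adj y x
    · rcases hadj with h | h
      · exact H.irrefl (f x) (heq ▸ hf x y h)
      · exact H.irrefl (f x) (heq ▸ hf y x h)
    · obtain ⟨z, ⟨h1, h2⟩ | ⟨h1, h2⟩⟩ := h2p x hx y hy hxy hadj
      · exact H.asymm _ _ (hf x z h1) (heq ▸ hf z y h2)
      · exact H.asymm _ _ (hf y z h1) (heq ▸ hf z x h2)
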